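/- Let d be a rational number that is not a rational square, and let V be a commutative ℚ-algebra containing elements x and y with y² = d·1, such that the family (1, y, x, x·y) is a ℚ-basis of V. Let Ã, A, D', C' be rational numbers with (C', D') ≠ (0, 0), and set Ξ = Ã·1 + A·y + D'·x + C'·(x·y). Then the family (1, y, Ξ, Ξ·y) is also a ℚ-basis of V. -/

import Mathlib

/-- if `(1, y, x, x·y)` is a `ℚ`-basis of the commutative `ℚ`-algebra `V` with
`y² = d` (`d` not a rational square) and `Ξ = Ã + A·y + D'·x + C'·x·y` with
`(C', D') ≠ (0, 0)`, then `(1, y, Ξ, Ξ·y)` is also a `ℚ`-basis. -/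
theorem stmt_11 (d : ℚ) (hdsq : ¬ ∃ t : ℚ, t ^ 2 = d)
    (V : Type*) [CommRing V] [Algebra ℚ V]
    (x y : V) (hy : y ^ 2 = d • (1 : V))
    (B : Module.Basis (Fin 4) ℚ V) (hB : ⇑B = ![1, y, x, x * y])
    (At A D' C' : ℚ) (hCD : ¬ (C' = 0 ∧ D' = 0))
    (Ξ : V) (hΞ : Ξ = At • (1 : V) + A • y + D' • x + C' • (x * y)) :
    ∃ B' : Module.Basis (Fin 4) ℚ V, ⇑B' = ![1, y, Ξ, Ξ * y] := by
  have hB0 : B 0 = 1 := by rw [hB]; rfl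
  have hB1 : B 1 = y := by rw [hB]; rfl
  have hB2 : B 2 = x := by rw [hB]; rfl
  have hB3 : B 3 = x * y := by rw [hB]; rfl
  set v : Fin 4 → V := ![1, y, Ξ, Ξ * y] with hv
  have hv0 : v 0 = B 0 := by simp [hv, hB0]
  have hv1 : v 1 = B 1 := by simp [hv, hB1]
  have hv2 : v 2 = At • B 0 + A • B 1 + D' • B 2 + C' • B 3 := by
    simp only [hv, hB0, hB1, hB2, hB3]
    simpa using hΞ
  have hyy : y * y = d • (1 : V) := by rw [← sq]; exact hy
  have h2 : (x * y) * y = d • x := by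
    rw [mul_assoc, hyy, mul_smul_comm, mul_one]
  have hv3 : v 3 = (A * d) • B 0 + At • B 1 + (C' * d) • B 2 + D' • B 3 := by
    simp only [hv, hB0, hB1, hB2, hB3]
    show Ξ * y = _
    rw [hΞ, add_mul, add_mul, add_mul, smul_mul_assoc, smul_mul_assoc,
      smul_mul_assoc, smul_mul_assoc, one_mul, hyy, h2]
    module
  have hdet : D' * D' - C' * C' * d ≠ 0 := by
    intro h
    rcases eq_or_ne C' 0 with hC | hC
    · subst hC
      simp only [mul_zero, zero_mul, sub_zero, mul_self_eq_zero] at h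
      exact hCD ⟨rfl, h⟩
    · apply hdsq
      exact ⟨D' / C', by field_simp; linarith [h]⟩
  have hu : IsUnit (B.det v) := by
    rw [Module.Basis.det_apply]
    have hM : B.toMatrix v =
        !![1, 0, At, A * d; 0, 1, A, At; 0, 0, D', C' * d; 0, 0, C', D'] := by
      ext i j
      rw [Module.Basis.toMatrix_apply]
      fin_cases j <;> fin_cases i <;>
        simp [hv0, hv1, hv2, hv3, Finsupp.single_apply, Matrix.vecHead, Matrix.vecTail]
    rw [hM, isUnit_iff_ne_zero]
    have : (!![1, 0, At, A * d; 0, 1, A, At; 0, 0, D', C' * d; 0, 0, C', D'] :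
        Matrix (Fin 4) (Fin 4) ℚ).det = D' * D' - C' * C' * d := by
      simp [Matrix.det_succ_row_zero, Fin.sum_univ_succ]
      ring
    rw [this]
    exact hdet
  obtain ⟨hli, hsp⟩ := (Module.Basis.is_basis_iff_det B).mpr hu
  exact ⟨Module.Basis.mk hli hsp.ge, Module.Basis.coe_mk _ _⟩
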